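/- Let T be a rooted binary tree with n ≥ 2 leaves having minimal Sackin index among trees with n leaves, and let k = ⌈log₂ n⌉. Then the height of T equals k, and T has exactly n − 2^{k−1} cherries of depth k. -/

import Mathlib

/-- Rooted binary trees: a single node (leaf) or a root with two subtrees. -/
inductive BTree : Type
  | leaf : BTree
  | node : BTree → BTree → BTree

namespace BTree

/-- Number of leaves of a rooted binary tree. -/
def leaves : BTree → ℕ
  | leaf => 1
  | node l r => l.leaves + r.leaves

/-- Sum of depths of all leaves, where the root of the tree is at depth `d`. -/
def sackinAux : BTree → ℕ → ℕ
  | leaf, d => d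
  | node l r, d => sackinAux l (d + 1) + sackinAux r (d + 1)

/-- Sackin index: the sum of the depths of all leaves. -/
def sackin (t : BTree) : ℕ := sackinAux t 0

/-- Sum, over all internal nodes `u`, of the number of leaves below `u`. -/
def internalLeafSum : BTree → ℕ
  | leaf => 0
  | node l r => (l.leaves + r.leaves) + internalLeafSum l + internalLeafSum r

/-- Sum, over all nodes `v`, of the number of leaves below `v`. -/
def allNodesLeafSum : BTree → ℕ
  | leaf => 1
  | node l r => (l.leaves + r.leaves) + allNodesLeafSum l + allNodesLeafSum r

/-- Sum, over all non-root nodes `v`, of the number of leaves below `v`. -/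
def nonRootLeafSum : BTree → ℕ
  | leaf => 0
  | node l r => allNodesLeafSum l + allNodesLeafSum r

/-- Height: maximal number of edges on a root-to-leaf path. -/
def height : BTree → ℕ
  | leaf => 0
  | node l r => max l.height r.height + 1

/-- Subtree at a given path from the root (`false` = left child, `true` = right child). -/
def subtreeAt : BTree → List Bool → Option BTree
  | t, [] => some t
  | leaf, _ :: _ => none
  | node l _, false :: p => subtreeAt l p
  | node _ r, true :: p => subtreeAt r p

/-- Number of cherries (pairs of sibling leaves) whose two leaves are at depth `d`. -/
def cherriesAt : BTree → ℕ → ℕ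
  | leaf, _ => 0
  | node leaf leaf, d => if d = 1 then 1 else 0
  | node _ _, 0 => 0
  | node l r, d + 1 => cherriesAt l d + cherriesAt r d

/-- `DeleteCherry t d t'` : `t'` is obtained from `t` by deleting a cherry `[u,v]`
(both leaves at depth `d`) together with the two pendant edges, turning the
parent `w` into a leaf. -/
inductive DeleteCherry : BTree → ℕ → BTree → Prop
  | base : DeleteCherry (BTree.node BTree.leaf BTree.leaf) 1 BTree.leaf
  | left {l l' r : BTree} {d : ℕ} :
      DeleteCherry l d l' → DeleteCherry (BTree.node l r) (d + 1) (BTree.node l' r)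
  | right {l r r' : BTree} {d : ℕ} :
      DeleteCherry r d r' → DeleteCherry (BTree.node l r) (d + 1) (BTree.node l r')

/-- Caterpillar tree with `n` leaves (for `n ≥ 1`): the unique rooted binary tree
with exactly one cherry. -/
def caterpillar : ℕ → BTree
  | 0 => BTree.leaf
  | 1 => BTree.leaf
  | n + 2 => BTree.node (caterpillar (n + 1)) BTree.leaf

/-- Fully balanced tree of height `k`, with `2^k` leaves all at depth `k`. -/
def balanced : ℕ → BTree
  | 0 => BTree.leaf
  | k + 1 => BTree.node (balanced k) (balanced k)

/-- Isomorphism of rooted binary trees (children are unordered). -/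
inductive Iso : BTree → BTree → Prop
  | leaf : Iso BTree.leaf BTree.leaf
  | node {a b c d : BTree} : Iso a c → Iso b d → Iso (BTree.node a b) (BTree.node c d)
  | swap {a b c d : BTree} : Iso a d → Iso b c → Iso (BTree.node a b) (BTree.node c d)

end BTree

open BTree

/-! ### Auxiliary lemmas -/

section Aux

lemma one_le_leaves (t : BTree) : 1 ≤ t.leaves := by
  induction t with
  | leaf => simp [leaves]
  | node l r ihl ihr => simp [leaves]; omega

lemma eq_leaf_of_leaves_eq_one {t : BTree} (h : t.leaves = 1) : t = BTree.leaf := by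
  cases t with
  | leaf => rfl
  | node l r =>
    have hl := one_le_leaves l
    have hr := one_le_leaves r
    simp [leaves] at h
    omega

lemma sackinAux_eq (t : BTree) (d : ℕ) : sackinAux t d = sackinAux t 0 + d * t.leaves := by
  induction t generalizing d with
  | leaf => simp [sackinAux, leaves]
  | node l r ihl ihr =>
    show sackinAux l (d + 1) + sackinAux r (d + 1)
        = sackinAux l (0 + 1) + sackinAux r (0 + 1) + d * (l.leaves + r.leaves)
    rw [ihl (d + 1), ihr (d + 1), ihl (0 + 1), ihr (0 + 1)]
    ring

lemma sackin_node (l r : BTree) :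
    (BTree.node l r).sackin = l.sackin + r.sackin + (l.leaves + r.leaves) := by
  show sackinAux l (0 + 1) + sackinAux r (0 + 1)
      = sackinAux l 0 + sackinAux r 0 + (l.leaves + r.leaves)
  rw [sackinAux_eq l (0 + 1), sackinAux_eq r (0 + 1)]
  ring

lemma cherriesAt_node (l r : BTree) (d : ℕ) (h : ¬(l = BTree.leaf ∧ r = BTree.leaf)) :
    cherriesAt (BTree.node l r) (d + 1) = cherriesAt l d + cherriesAt r d := by
  cases l with
  | leaf =>
    cases r with
    | leaf => exact absurd ⟨rfl, rfl⟩ h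
    | node r1 r2 => rfl
  | node l1 l2 => cases r <;> rfl

lemma cherriesAt_of_height_lt : ∀ (t : BTree) (d : ℕ), t.height < d → cherriesAt t d = 0
  | BTree.leaf, d, _ => by simp [cherriesAt]
  | BTree.node BTree.leaf BTree.leaf, d, h => by
    simp [height] at h
    simp [cherriesAt]
    omega
  | BTree.node BTree.leaf (BTree.node r1 r2), d, h => by
    simp [height] at h
    obtain ⟨d', rfl⟩ : ∃ d', d = d' + 1 := ⟨d - 1, by omega⟩
    show cherriesAt BTree.leaf d' + cherriesAt (BTree.node r1 r2) d' = 0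
    rw [cherriesAt_of_height_lt BTree.leaf d' (by simp [height]; omega),
      cherriesAt_of_height_lt (BTree.node r1 r2) d' (by simp [height] at *; omega)]
  | BTree.node (BTree.node l1 l2) r, d, h => by
    simp [height] at h
    obtain ⟨d', rfl⟩ : ∃ d', d = d' + 1 := ⟨d - 1, by omega⟩
    show cherriesAt (BTree.node l1 l2) d' + cherriesAt r d' = 0
    rw [cherriesAt_of_height_lt (BTree.node l1 l2) d' (by simp [height] at *; omega),
      cherriesAt_of_height_lt r d' (by simp [height] at *; omega)]

/-! ### Numeric facts -/

lemma succ_le_two_pow (d : ℕ) : d + 1 ≤ 2 ^ d := (Nat.lt_two_pow_self (n := d))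

lemma add_two_le_two_pow {d : ℕ} (h : 2 ≤ d) : d + 2 ≤ 2 ^ d := by
  have h1 : d ≤ 2 ^ (d - 1) := by
    have := succ_le_two_pow (d - 1)
    omega
  have h2 : (2 : ℕ) ^ d = 2 ^ (d - 1) + 2 ^ (d - 1) := by
    conv_lhs => rw [show d = (d - 1) + 1 by omega]
    rw [pow_succ]; ring
  omega

lemma two_pow_clog_lt {n : ℕ} (hn : 1 ≤ n) : 2 ^ Nat.clog 2 n < 2 * n := by
  rcases Nat.lt_or_ge n 2 with h | h
  · have : n = 1 := by omega
    subst this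
    simp [Nat.clog_one_right]
  · have hpos : 0 < Nat.clog 2 n := Nat.clog_pos (by norm_num) h
    have hlt : 2 ^ (Nat.clog 2 n - 1) < n := Nat.pow_pred_clog_lt_self (by norm_num) h
    have h2 : 2 ^ Nat.clog 2 n = 2 * 2 ^ (Nat.clog 2 n - 1) := by
      conv_lhs => rw [show Nat.clog 2 n = (Nat.clog 2 n - 1) + 1 by omega]
      rw [pow_succ]; ring
    omega

lemma le_two_pow_clog (n : ℕ) : n ≤ 2 ^ Nat.clog 2 n := Nat.le_pow_clog (by norm_num) n

/-- Key numeric inequality plus its equality analysis, asymmetric version. -/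
lemma keyAux {a b : ℕ} (ha : 1 ≤ a) (hb : 1 ≤ b)
    (hab : Nat.clog 2 a ≤ Nat.clog 2 b) :
    ((Nat.clog 2 (a + b) + 1) * (a + b) + 2 ^ Nat.clog 2 a + 2 ^ Nat.clog 2 b
      ≤ (Nat.clog 2 a + 2) * a + (Nat.clog 2 b + 2) * b + 2 ^ Nat.clog 2 (a + b))
    ∧ ((Nat.clog 2 (a + b) + 1) * (a + b) + 2 ^ Nat.clog 2 a + 2 ^ Nat.clog 2 b
        = (Nat.clog 2 a + 2) * a + (Nat.clog 2 b + 2) * b + 2 ^ Nat.clog 2 (a + b) →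
      Nat.clog 2 (a + b) = Nat.clog 2 b + 1 ∧
        (Nat.clog 2 a < Nat.clog 2 b →
          Nat.clog 2 b = Nat.clog 2 a + 1 ∧ a = 2 ^ Nat.clog 2 a)) := by
  set ka := Nat.clog 2 a with hka_def
  set kb := Nat.clog 2 b with hkb_def
  set k := Nat.clog 2 (a + b) with hk_def
  have hpa : a ≤ 2 ^ ka := le_two_pow_clog a
  have hpb : b ≤ 2 ^ kb := le_two_pow_clog b
  have hpa2 : 2 ^ ka < 2 * a := two_pow_clog_lt ha
  have hpb2 : 2 ^ kb < 2 * b := two_pow_clog_lt hb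
  have hmono : 2 ^ ka ≤ 2 ^ kb := Nat.pow_le_pow_right (by norm_num) hab
  have hk_ge : kb ≤ k := Nat.clog_mono_right 2 (by omega)
  have hk_le : k ≤ kb + 1 := by
    rw [hk_def]
    rw [Nat.clog_le_iff_le_pow (by norm_num)]
    have : (2 : ℕ) ^ (kb + 1) = 2 ^ kb + 2 ^ kb := by rw [pow_succ]; ring
    omega
  rcases (by omega : k = kb ∨ k = kb + 1) with hk | hk
  · -- case k = kb : the inequality is strict
    have hab_le : a + b ≤ 2 ^ kb := by
      have := le_two_pow_clog (a + b)
      rw [← hk_def, hk] at this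
      exact this
    have hstrict : (k + 1) * (a + b) + 2 ^ ka + 2 ^ kb
        < (ka + 2) * a + (kb + 2) * b + 2 ^ k := by
      rcases Nat.eq_or_lt_of_le hab with h0 | h0
      · exfalso
        rw [h0] at hpa2
        omega
      · have c4 : 2 ^ (kb - 1) < b := by
          have hsp : (2 : ℕ) ^ kb = 2 ^ (kb - 1) + 2 ^ (kb - 1) := by
            conv_lhs => rw [show kb = (kb - 1) + 1 by omega]
            rw [pow_succ]; ring
          omega
        have c1 : (kb - ka - 1) * a ≤ (kb - ka - 1) * 2 ^ ka := Nat.mul_le_mul_left _ hpa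
        have c2 : (kb - ka) * 2 ^ ka ≤ 2 ^ (kb - ka - 1) * 2 ^ ka := by
          apply Nat.mul_le_mul_right
          have := succ_le_two_pow (kb - ka - 1)
          omega
        have c3 : (2 : ℕ) ^ (kb - ka - 1) * 2 ^ ka = 2 ^ (kb - 1) := by
          rw [← pow_add]; congr 1; omega
        have c5 : (kb - ka) * 2 ^ ka = (kb - ka - 1) * 2 ^ ka + 2 ^ ka := by
          conv_lhs => rw [show kb - ka = (kb - ka - 1) + 1 by omega]
          rw [add_mul, one_mul]
        have hchain : (kb - ka - 1) * a + 2 ^ ka < b := by linarith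
        have e1 : (kb + 1) * (a + b) = (kb + 1) * a + (kb + 1) * b := by ring
        have e2 : (kb + 1) * a = (ka + 2) * a + (kb - ka - 1) * a := by
          rw [show kb + 1 = (ka + 2) + (kb - ka - 1) by omega, add_mul]
        have e3 : (kb + 2) * b = (kb + 1) * b + b := by ring
        rw [hk]
        linarith
    exact ⟨le_of_lt hstrict, fun heq => absurd heq (ne_of_lt hstrict)⟩
  · -- case k = kb + 1
    have hd : (kb - ka) * a + 2 ^ ka ≤ 2 ^ kb := by
      have h1 : (kb - ka) * a ≤ (kb - ka) * 2 ^ ka := Nat.mul_le_mul_left _ hpa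
      have h2 : ((kb - ka) + 1) * 2 ^ ka ≤ 2 ^ (kb - ka) * 2 ^ ka :=
        Nat.mul_le_mul_right _ (succ_le_two_pow _)
      have h3 : (2 : ℕ) ^ (kb - ka) * 2 ^ ka = 2 ^ kb := by
        rw [← pow_add]; congr 1; omega
      have h4 : ((kb - ka) + 1) * 2 ^ ka = (kb - ka) * 2 ^ ka + 2 ^ ka := by ring
      linarith
    have e1 : (kb + 2) * (a + b) = (kb + 2) * a + (kb + 2) * b := by ring
    have e2 : (kb + 2) * a = (ka + 2) * a + (kb - ka) * a := by
      rw [show kb + 2 = (ka + 2) + (kb - ka) by omega, add_mul]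
    have e4 : (2 : ℕ) ^ (kb + 1) = 2 * 2 ^ kb := by rw [pow_succ]; ring
    have e0 : (kb + 1 + 1) * (a + b) = (kb + 2) * (a + b) := by ring
    constructor
    · rw [hk, e4]
      linarith
    · intro heq
      refine ⟨hk, fun hlt => ?_⟩
      rw [hk, e4] at heq
      have hEq : (kb - ka) * a + 2 ^ ka = 2 ^ kb := by linarith
      rcases (by omega : kb - ka = 1 ∨ 2 ≤ kb - ka) with hd1 | hd2
      · have h3 : (2 : ℕ) ^ kb = 2 * 2 ^ ka := by
          rw [show kb = ka + 1 by omega, pow_succ]; ring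
        rw [hd1, one_mul] at hEq
        exact ⟨by omega, by omega⟩
      · exfalso
        have h1 : (kb - ka) * a ≤ (kb - ka) * 2 ^ ka := Nat.mul_le_mul_left _ hpa
        have h2 : ((kb - ka) + 2) * 2 ^ ka ≤ 2 ^ (kb - ka) * 2 ^ ka :=
          Nat.mul_le_mul_right _ (add_two_le_two_pow hd2)
        have h3 : (2 : ℕ) ^ (kb - ka) * 2 ^ ka = 2 ^ kb := by
          rw [← pow_add]; congr 1; omega
        have h4 : ((kb - ka) + 2) * 2 ^ ka = (kb - ka) * 2 ^ ka + 2 * 2 ^ ka := by ring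
        have h5 : 1 ≤ 2 ^ ka := Nat.one_le_two_pow
        linarith

/-- Key numeric inequality plus its equality analysis (symmetric form). -/
lemma key {a b : ℕ} (ha : 1 ≤ a) (hb : 1 ≤ b) :
    ((Nat.clog 2 (a + b) + 1) * (a + b) + 2 ^ Nat.clog 2 a + 2 ^ Nat.clog 2 b
      ≤ (Nat.clog 2 a + 2) * a + (Nat.clog 2 b + 2) * b + 2 ^ Nat.clog 2 (a + b))
    ∧ ((Nat.clog 2 (a + b) + 1) * (a + b) + 2 ^ Nat.clog 2 a + 2 ^ Nat.clog 2 b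
        = (Nat.clog 2 a + 2) * a + (Nat.clog 2 b + 2) * b + 2 ^ Nat.clog 2 (a + b) →
      Nat.clog 2 (a + b) = max (Nat.clog 2 a) (Nat.clog 2 b) + 1 ∧
        (Nat.clog 2 a < Nat.clog 2 b →
          Nat.clog 2 b = Nat.clog 2 a + 1 ∧ a = 2 ^ Nat.clog 2 a) ∧
        (Nat.clog 2 b < Nat.clog 2 a →
          Nat.clog 2 a = Nat.clog 2 b + 1 ∧ b = 2 ^ Nat.clog 2 b)) := by
  rcases le_total (Nat.clog 2 a) (Nat.clog 2 b) with hab | hab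
  · obtain ⟨h1, h2⟩ := keyAux ha hb hab
    refine ⟨h1, fun heq => ?_⟩
    obtain ⟨hk, hc⟩ := h2 heq
    exact ⟨by rw [Nat.max_eq_right hab]; exact hk, hc, fun h => absurd h (by omega)⟩
  · obtain ⟨h1, h2⟩ := keyAux hb ha hab
    rw [Nat.add_comm b a] at h1 h2
    constructor
    · linarith
    · intro heq
      obtain ⟨hk, hc⟩ := h2 (by linarith)
      exact ⟨by rw [Nat.max_eq_left hab]; exact hk, fun h => absurd h (by omega), hc⟩

/-- Lower bound on the Sackin index. -/
lemma sackin_lower : ∀ t : BTree,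
    (Nat.clog 2 t.leaves + 1) * t.leaves ≤ t.sackin + 2 ^ Nat.clog 2 t.leaves := by
  intro t
  induction t with
  | leaf => simp [sackin, sackinAux, leaves, Nat.clog_one_right]
  | node l r ihl ihr =>
    have ha := one_le_leaves l
    have hb := one_le_leaves r
    have hkey := (key ha hb).1
    have hs := sackin_node l r
    have hleaves : (BTree.node l r).leaves = l.leaves + r.leaves := rfl
    rw [hleaves, hs]
    have e1 : (Nat.clog 2 l.leaves + 2) * l.leaves
        = (Nat.clog 2 l.leaves + 1) * l.leaves + l.leaves := by ring
    have e2 : (Nat.clog 2 r.leaves + 2) * r.leaves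
        = (Nat.clog 2 r.leaves + 1) * r.leaves + r.leaves := by ring
    linarith

/-- The `mixT` tree: a balanced tree of height `k` with `m ≤ 2^k` of its leaves
replaced by cherries; it has `2^k + m` leaves and minimal Sackin index. -/
def mixT : ℕ → ℕ → BTree
  | 0, 0 => BTree.leaf
  | 0, _ + 1 => BTree.node BTree.leaf BTree.leaf
  | k + 1, m => BTree.node (mixT k (min m (2 ^ k))) (mixT k (m - 2 ^ k))

lemma mixT_leaves : ∀ k m, m ≤ 2 ^ k → (mixT k m).leaves = 2 ^ k + m := by
  intro k
  induction k with
  | zero =>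
    intro m hm
    interval_cases m <;> simp [mixT, leaves]
  | succ k ih =>
    intro m hm
    have h2 : (2 : ℕ) ^ (k + 1) = 2 ^ k + 2 ^ k := by rw [pow_succ]; ring
    have hl := ih (min m (2 ^ k)) (by omega)
    have hr := ih (m - 2 ^ k) (by omega)
    show (mixT k (min m (2 ^ k))).leaves + (mixT k (m - 2 ^ k)).leaves = _
    rw [hl, hr]
    omega

lemma mixT_sackinAux : ∀ k m, m ≤ 2 ^ k → ∀ d,
    sackinAux (mixT k m) d = 2 ^ k * (d + k) + m * (d + k + 2) := by
  intro k
  induction k with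
  | zero =>
    intro m hm d
    interval_cases m <;> simp [mixT, sackinAux] <;> ring
  | succ k ih =>
    intro m hm d
    have h2 : (2 : ℕ) ^ (k + 1) = 2 ^ k + 2 ^ k := by rw [pow_succ]; ring
    have hl := ih (min m (2 ^ k)) (by omega) (d + 1)
    have hr := ih (m - 2 ^ k) (by omega) (d + 1)
    show sackinAux (mixT k (min m (2 ^ k))) (d + 1) + sackinAux (mixT k (m - 2 ^ k)) (d + 1) = _
    rw [hl, hr]
    have hgen : ∀ X Y : ℕ, X + Y = m →
        2 ^ k * (d + 1 + k) + X * (d + 1 + k + 2) + (2 ^ k * (d + 1 + k) + Y * (d + 1 + k + 2))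
          = 2 ^ (k + 1) * (d + (k + 1)) + m * (d + (k + 1) + 2) := by
      intro X Y hXY
      subst hXY
      rw [pow_succ]
      ring
    exact hgen _ _ (by omega)

/-- Structure of minimal-Sackin trees. -/
lemma minimal_struct : ∀ t : BTree,
    t.sackin + 2 ^ Nat.clog 2 t.leaves = (Nat.clog 2 t.leaves + 1) * t.leaves →
    t.height = Nat.clog 2 t.leaves ∧
      cherriesAt t (Nat.clog 2 t.leaves) + 2 ^ (Nat.clog 2 t.leaves - 1) = t.leaves := by
  intro t
  induction t with
  | leaf =>
    intro _
    simp [height, leaves, Nat.clog_one_right, cherriesAt]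
  | node l r ihl ihr =>
    intro heq
    have ha := one_le_leaves l
    have hb := one_le_leaves r
    have hleaves : (BTree.node l r).leaves = l.leaves + r.leaves := rfl
    rw [hleaves, sackin_node] at heq
    have hLl := sackin_lower l
    have hLr := sackin_lower r
    have hkey := (key ha hb).1
    have e1 : (Nat.clog 2 l.leaves + 2) * l.leaves
        = (Nat.clog 2 l.leaves + 1) * l.leaves + l.leaves := by ring
    have e2 : (Nat.clog 2 r.leaves + 2) * r.leaves
        = (Nat.clog 2 r.leaves + 1) * r.leaves + r.leaves := by ring
    have hEl : l.sackin + 2 ^ Nat.clog 2 l.leaves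
        = (Nat.clog 2 l.leaves + 1) * l.leaves := by linarith
    have hEr : r.sackin + 2 ^ Nat.clog 2 r.leaves
        = (Nat.clog 2 r.leaves + 1) * r.leaves := by linarith
    have hKeyEq : (Nat.clog 2 (l.leaves + r.leaves) + 1) * (l.leaves + r.leaves)
          + 2 ^ Nat.clog 2 l.leaves + 2 ^ Nat.clog 2 r.leaves
        = (Nat.clog 2 l.leaves + 2) * l.leaves + (Nat.clog 2 r.leaves + 2) * r.leaves
          + 2 ^ Nat.clog 2 (l.leaves + r.leaves) := by linarith
    obtain ⟨hk, hcl, hcr⟩ := (key ha hb).2 hKeyEq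
    obtain ⟨hhl, hchl⟩ := ihl hEl
    obtain ⟨hhr, hchr⟩ := ihr hEr
    set ka := Nat.clog 2 l.leaves with hka_def
    set kb := Nat.clog 2 r.leaves with hkb_def
    set k := Nat.clog 2 (l.leaves + r.leaves) with hk_def
    have hheight : (BTree.node l r).height = k := by
      show max l.height r.height + 1 = k
      rw [hhl, hhr, hk]
    refine ⟨by rw [hleaves]; exact hheight, ?_⟩
    rw [hleaves]
    show cherriesAt (BTree.node l r) k + 2 ^ (k - 1) = l.leaves + r.leaves
    by_cases hll : l = BTree.leaf ∧ r = BTree.leaf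
    · obtain ⟨rfl, rfl⟩ := hll
      have hk1' : k = 1 := by
        rw [hk_def]
        exact Nat.clog_eq_one le_rfl le_rfl
      rw [hk1']
      simp [cherriesAt, leaves]
    · have hrec : cherriesAt (BTree.node l r) k
          = cherriesAt l (k - 1) + cherriesAt r (k - 1) := by
        rw [show k = (k - 1) + 1 by omega]
        exact cherriesAt_node l r (k - 1) hll
      rw [hrec]
      rcases Nat.lt_trichotomy ka kb with hlt | hlt | hlt
      · obtain ⟨hkb1, hal⟩ := hcl hlt
        have hkm1 : k - 1 = kb := by omega
        have hzl : cherriesAt l kb = 0 := by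
          apply cherriesAt_of_height_lt
          rw [hhl]; omega
        have hp : (2 : ℕ) ^ kb = 2 ^ (kb - 1) + 2 ^ (kb - 1) := by
          conv_lhs => rw [show kb = (kb - 1) + 1 by omega]
          rw [pow_succ]; ring
        have hka_eq : ka = kb - 1 := by omega
        rw [hka_eq] at hal
        rw [hkm1, hzl]
        linarith
      · -- ka = kb
        have hka0 : 1 ≤ ka := by
          by_contra h0
          have hka0 : ka = 0 := by omega
          have hl1 : l.leaves = 1 := by
            have := le_two_pow_clog l.leaves
            rw [← hka_def, hka0] at this
            simp at this
            omega
          have hr1 : r.leaves = 1 := by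
            have := le_two_pow_clog r.leaves
            rw [← hkb_def, ← hlt, hka0] at this
            simp at this
            omega
          exact hll ⟨eq_leaf_of_leaves_eq_one hl1, eq_leaf_of_leaves_eq_one hr1⟩
        have hkm1 : k - 1 = ka := by omega
        have hp : (2 : ℕ) ^ ka = 2 ^ (ka - 1) + 2 ^ (ka - 1) := by
          conv_lhs => rw [show ka = (ka - 1) + 1 by omega]
          rw [pow_succ]; ring
        rw [hkm1]
        rw [← hlt] at hchr
        linarith
      · obtain ⟨hka1, hbl⟩ := hcr hlt
        have hkm1 : k - 1 = ka := by omega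
        have hzr : cherriesAt r ka = 0 := by
          apply cherriesAt_of_height_lt
          rw [hhr]; omega
        have hp : (2 : ℕ) ^ ka = 2 ^ (ka - 1) + 2 ^ (ka - 1) := by
          conv_lhs => rw [show ka = (ka - 1) + 1 by omega]
          rw [pow_succ]; ring
        have hkb_eq : kb = ka - 1 := by omega
        rw [hkb_eq] at hbl
        rw [hkm1, hzr]
        linarith

end Aux

/-- a minimal-Sackin tree with `n ≥ 2` leaves has height
`k = ⌈log₂ n⌉` and exactly `n − 2^{k−1}` cherries of depth `k`. -/
theorem stmt14 (t : BTree) (h2 : 2 ≤ t.leaves)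
    (hmin : ∀ t' : BTree, t'.leaves = t.leaves → t.sackin ≤ t'.sackin) :
    t.height = Nat.clog 2 t.leaves ∧
    cherriesAt t (Nat.clog 2 t.leaves) = t.leaves - 2 ^ (Nat.clog 2 t.leaves - 1) := by
  set n := t.leaves with hn_def
  set k := Nat.clog 2 n with hk_def
  have hk1 : 1 ≤ k := Nat.clog_pos (by norm_num) h2
  have hpow : 2 ^ (k - 1) < n := Nat.pow_pred_clog_lt_self (by norm_num) h2
  have hn2k : n ≤ 2 ^ k := le_two_pow_clog n
  have h2k : (2 : ℕ) ^ k = 2 ^ (k - 1) + 2 ^ (k - 1) := by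
    conv_lhs => rw [show k = (k - 1) + 1 by omega]
    rw [pow_succ]; ring
  set m := n - 2 ^ (k - 1) with hm_def
  have hm : m ≤ 2 ^ (k - 1) := by omega
  have hlv : (mixT (k - 1) m).leaves = n := by rw [mixT_leaves _ _ hm]; omega
  have hub := hmin (mixT (k - 1) m) hlv
  have hsmix : (mixT (k - 1) m).sackin = 2 ^ (k - 1) * (k - 1) + m * (k - 1 + 2) := by
    show sackinAux (mixT (k - 1) m) 0 = _
    rw [mixT_sackinAux _ _ hm 0]
    ring
  have hlow := sackin_lower t
  rw [← hn_def, ← hk_def] at hlow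
  have harith : 2 ^ (k - 1) * (k - 1) + m * (k - 1 + 2) + 2 ^ k = (k + 1) * n := by
    have e5 : (2 : ℕ) ^ k = 2 ^ (k - 1) * 2 := by
      conv_lhs => rw [show k = (k - 1) + 1 by omega]
      rw [pow_succ]
    have hn_eq : n = 2 ^ (k - 1) + m := by omega
    have e6 : k + 1 = (k - 1) + 2 := by omega
    rw [hn_eq, e6, e5]
    ring
  have hEq : t.sackin + 2 ^ k = (k + 1) * n := by
    rw [hsmix] at hub
    linarith
  obtain ⟨hh, hc⟩ := minimal_struct t (by rw [← hn_def, ← hk_def]; exact hEq)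
  rw [← hn_def, ← hk_def] at hh hc
  exact ⟨hh, by omega⟩
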